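/- Fix τ > 0, 0 < K₁ < 1, and p with 1 ≤ p < ∞. Define Θ_{−τ,b}(λ) := λ³/6 + 2^{−2/3} τ λ² − 2^{−1/3}(2σ + τ² − s) λ (which is the phase with endpoint b = σ + τ² − s), K(s) := τ³/3 − sτ, and the contour parametrization λ(u) := 2^{1/3}τ + u(1/2 + (2/√3) i). Then there exist C > 0 and σ₀ > 0 such that for all σ ≥ σ₀ and all real s with s ≤ K₁(σ + τ²): ( ∫_0^∞ |exp( Θ_{−τ,b}(λ(u)) + K(s) )|^p du )^{1/p} ≤ C e^{−2τ(1−K₁)σ}, and also sup_{u ≥ 0} |exp( Θ_{−τ,b}(λ(u)) + K(s) )| ≤ C e^{−2τ(1−K₁)σ}. Thus this jump entry of the tacnode Riemann–Hilbert problem tends to zero exponentially fast in every L^p norm as σ → +∞. -/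

import Mathlib

open MeasureTheory Set Complex

/-- The phase `Θ_{−τ,b}(λ) = λ³/6 + 2^{−2/3}τλ² − 2^{−1/3}(2σ + τ² − s)λ`,
i.e. the phase with endpoint `b = σ + τ² − s`. -/
noncomputable def ThetaB (τ σ s : ℝ) (l : ℂ) : ℂ :=
  l ^ 3 / 6 + ((2 : ℝ) ^ (-(2 : ℝ) / 3) * τ : ℝ) * l ^ 2
    - ((2 : ℝ) ^ (-(1 : ℝ) / 3) * (2 * σ + τ ^ 2 - s) : ℝ) * l

/-- The conjugation constant `K(s) = τ³/3 − sτ`. -/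
noncomputable def Kconst (τ s : ℝ) : ℝ := τ ^ 3 / 3 - s * τ

/-- The contour parametrization `λ(u) = 2^{1/3}τ + u(1/2 + (2/√3)i)`, `u ≥ 0`. -/
noncomputable def lamR3 (τ u : ℝ) : ℂ :=
  ((2 : ℝ) ^ ((1 : ℝ) / 3) * τ : ℝ) + u * (1 / 2 + (2 / Real.sqrt 3 : ℝ) * Complex.I)

lemma re_eq_aux (τ σ s u : ℝ) :
    (ThetaB τ σ s (lamR3 τ u) + (Kconst τ s : ℂ)).re
    = 2/3*τ^3 - 2*σ*τ + ((2:ℝ)^((2:ℝ)/3)/4*(2*τ^2 - 2*σ + s))*u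
      - 13/12*((2:ℝ)^((1:ℝ)/3)*τ)*u^2 - 5/16*u^3 := by
  have hr0 : (0:ℝ) < (2:ℝ)^((1:ℝ)/3) := Real.rpow_pos_of_pos two_pos _
  have hr3 : ((2:ℝ)^((1:ℝ)/3))^3 = 2 := by
    rw [← Real.rpow_natCast ((2:ℝ)^((1:ℝ)/3)) 3, ← Real.rpow_mul (by norm_num)]
    norm_num
  have hr2 : (2:ℝ)^((2:ℝ)/3) = ((2:ℝ)^((1:ℝ)/3))^2 := by
    rw [← Real.rpow_natCast ((2:ℝ)^((1:ℝ)/3)) 2, ← Real.rpow_mul (by norm_num)]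
    norm_num
  have h23 : (2:ℝ)^(-(2:ℝ)/3) = ((2:ℝ)^((1:ℝ)/3))/2 := by
    rw [show (-(2:ℝ)/3) = (1:ℝ)/3 - 1 by norm_num, Real.rpow_sub two_pos]
    norm_num
  have h13 : (2:ℝ)^(-(1:ℝ)/3) = ((2:ℝ)^((1:ℝ)/3))^2/2 := by
    rw [show (-(1:ℝ)/3) = (2:ℝ)/3 - 1 by norm_num, Real.rpow_sub two_pos, hr2]
    norm_num
  have hs3 : Real.sqrt 3 ^ 2 = 3 := Real.sq_sqrt (by norm_num)
  have hs0 : Real.sqrt 3 ≠ 0 := by positivity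
  set r : ℝ := (2:ℝ)^((1:ℝ)/3)
  simp only [ThetaB, lamR3, Kconst, h23, h13, hr2]
  rw [show (2:ℝ)^((1:ℝ)/3) = r from rfl]
  simp only [Complex.add_re, Complex.sub_re, Complex.mul_re, Complex.mul_im,
    Complex.add_im, Complex.sub_im, Complex.ofReal_re, Complex.ofReal_im,
    Complex.I_re, Complex.I_im, Complex.div_re, Complex.div_im, Complex.normSq_apply,
    pow_succ, pow_zero, one_mul, Complex.one_re, Complex.one_im, Complex.re_ofNat, Complex.im_ofNat
    ]
  have hw3 : Real.sqrt 3 ^ 3 = 3 * Real.sqrt 3 := by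
    rw [pow_succ, hs3]
  field_simp
  ring_nf
  rw [hw3, hr3]
  ring

lemma re_le_aux (τ K₁ : ℝ) (hτ : 0 < τ) (hK₁0 : 0 < K₁) (hK₁1 : K₁ < 1)
    (σ s u : ℝ) (hσ1 : 1 ≤ σ) (hσ2 : 3*τ^2/(1-K₁) ≤ σ) (hs : s ≤ K₁*(σ+τ^2)) (hu : 0 ≤ u) :
    (ThetaB τ σ s (lamR3 τ u) + (Kconst τ s : ℂ)).re ≤ 2/3*τ^3 - 2*σ*τ - u/4 := by
  rw [re_eq_aux]
  have hK : (0:ℝ) < 1 - K₁ := by linarith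
  have h3 : 3*τ^2 ≤ (1-K₁)*σ := by
    rw [div_le_iff₀ hK] at hσ2; linarith [hσ2]
  have h1 : 2*τ^2 - 2*σ + s ≤ -1 := by nlinarith [sq_nonneg τ]
  have hq1 : (1:ℝ) ≤ (2:ℝ)^((2:ℝ)/3) := by
    rw [show (1:ℝ) = (2:ℝ)^(0:ℝ) by simp]
    exact Real.rpow_le_rpow_of_exponent_le (by norm_num) (by norm_num)
  have hq0 : (0:ℝ) < (2:ℝ)^((2:ℝ)/3) := Real.rpow_pos_of_pos two_pos _
  have hA : (2:ℝ)^((2:ℝ)/3)/4*(2*τ^2 - 2*σ + s) ≤ -1/4 := by nlinarith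
  have hAu : ((2:ℝ)^((2:ℝ)/3)/4*(2*τ^2 - 2*σ + s))*u ≤ (-1/4)*u :=
    mul_le_mul_of_nonneg_right hA hu
  have hr0 : (0:ℝ) < (2:ℝ)^((1:ℝ)/3) := Real.rpow_pos_of_pos two_pos _
  have h2 : (0:ℝ) ≤ 13/12*((2:ℝ)^((1:ℝ)/3)*τ)*u^2 := by positivity
  have h3' : (0:ℝ) ≤ 5/16*u^3 := by positivity
  linarith

lemma integral_exp_neg_const_mul {b : ℝ} (hb : 0 < b) :
    ∫ x in Ioi (0:ℝ), Real.exp (-b * x) = b⁻¹ := by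
  have h := integral_exp_neg_mul_rpow one_pos hb
  simp only [Real.rpow_one] at h
  rw [h, show (-1)/(1:ℝ) = -1 by norm_num, Real.rpow_neg_one]
  norm_num [Real.Gamma_two]

/-- The jump entry `e^{Θ_{−τ,b}(λ) + K(s)}` of the tacnode Riemann–Hilbert problem tends to
zero exponentially fast in every `L^p` norm as `σ → +∞`: for fixed `τ > 0`, `0 < K₁ < 1`
and `1 ≤ p < ∞` there are `C > 0` and `σ₀ > 0` such that for all `σ ≥ σ₀` and all
`s ≤ K₁(σ + τ²)`, both the `L^p` norm on the contour and the sup over the contour are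
bounded by `C e^{−2τ(1−K₁)σ}`. -/
theorem jump_R3_exponentially_suppressed (τ K₁ p : ℝ)
    (hτ : 0 < τ) (hK₁0 : 0 < K₁) (hK₁1 : K₁ < 1) (hp : 1 ≤ p) :
    ∃ C > (0 : ℝ), ∃ σ₀ > (0 : ℝ), ∀ σ : ℝ, σ₀ ≤ σ → ∀ s : ℝ, s ≤ K₁ * (σ + τ ^ 2) →
      ((∫ u in Ioi (0 : ℝ),
            ‖Complex.exp (ThetaB τ σ s (lamR3 τ u) + (Kconst τ s : ℂ))‖ ^ p) ^ (1 / p) ≤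
          C * Real.exp (-2 * τ * (1 - K₁) * σ)) ∧
        ∀ u : ℝ, 0 ≤ u →
          ‖Complex.exp (ThetaB τ σ s (lamR3 τ u) + (Kconst τ s : ℂ))‖ ≤
            C * Real.exp (-2 * τ * (1 - K₁) * σ) := by
  have hp0 : (0:ℝ) < p := lt_of_lt_of_le one_pos hp
  refine ⟨4 * Real.exp (2/3*τ^3), by positivity,
    max 1 (3*τ^2/(1-K₁)), lt_of_lt_of_le one_pos (le_max_left _ _), ?_⟩
  intro σ hσ s hs
  have hσ1 : 1 ≤ σ := le_trans (le_max_left _ _) hσ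
  have hσ2 : 3*τ^2/(1-K₁) ≤ σ := le_trans (le_max_right _ _) hσ
  set c : ℝ := 2/3*τ^3 - 2*σ*τ with hc
  -- pointwise bound on the norm
  have hnorm : ∀ u : ℝ, 0 ≤ u →
      ‖Complex.exp (ThetaB τ σ s (lamR3 τ u) + (Kconst τ s : ℂ))‖
        ≤ Real.exp c * Real.exp (-(1/4) * u) := by
    intro u hu
    rw [Complex.norm_exp, ← Real.exp_add]
    apply Real.exp_le_exp.2
    have := re_le_aux τ K₁ hτ hK₁0 hK₁1 σ s u hσ1 hσ2 hs hu
    linarith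
  -- the exponential comparison
  have hE : Real.exp c ≤ Real.exp (2/3*τ^3) * Real.exp (-2*τ*(1-K₁)*σ) := by
    rw [← Real.exp_add]
    apply Real.exp_le_exp.2
    have : 0 ≤ 2*τ*K₁*σ := by positivity
    nlinarith
  constructor
  · -- the Lᵖ bound
    set X : ℝ := ∫ u in Ioi (0:ℝ),
      ‖Complex.exp (ThetaB τ σ s (lamR3 τ u) + (Kconst τ s : ℂ))‖ ^ p with hX
    have hX0 : 0 ≤ X :=
      integral_nonneg fun u => Real.rpow_nonneg (norm_nonneg _) p
    have hgint : IntegrableOn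
        (fun u : ℝ => Real.exp (c*p) * Real.exp (-(p/4) * u)) (Ioi 0) :=
      (exp_neg_integrableOn_Ioi 0 (by positivity)).const_mul _
    have hXle : X ≤ Real.exp (c*p) * (p/4)⁻¹ := by
      have hmono : X ≤ ∫ u in Ioi (0:ℝ), Real.exp (c*p) * Real.exp (-(p/4) * u) := by
        apply integral_mono_of_nonneg
        · exact Filter.Eventually.of_forall fun u => Real.rpow_nonneg (norm_nonneg _) p
        · exact hgint
        · rw [Filter.EventuallyLE, ae_restrict_iff' measurableSet_Ioi]
          refine Filter.Eventually.of_forall fun u hu => ?_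
          have hu0 : (0:ℝ) ≤ u := le_of_lt hu
          have h1 := hnorm u hu0
          calc ‖Complex.exp (ThetaB τ σ s (lamR3 τ u) + (Kconst τ s : ℂ))‖ ^ p
              ≤ (Real.exp c * Real.exp (-(1/4) * u)) ^ p :=
                Real.rpow_le_rpow (norm_nonneg _) h1 (le_of_lt hp0)
            _ = Real.exp (c*p) * Real.exp (-(p/4) * u) := by
                rw [← Real.exp_add, ← Real.exp_mul, ← Real.exp_add]
                congr 1
                ring
      rw [MeasureTheory.integral_const_mul, integral_exp_neg_const_mul (by positivity)] at hmono
      exact hmono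
    have hXle2 : X ≤ (4 * Real.exp c) ^ p := by
      have h4p : (4:ℝ) ≤ (4:ℝ)^p := by
        calc (4:ℝ) = (4:ℝ)^(1:ℝ) := (Real.rpow_one 4).symm
          _ ≤ (4:ℝ)^p := Real.rpow_le_rpow_of_exponent_le (by norm_num) hp
      have hinv : (p/4)⁻¹ ≤ 4 := by
        rw [inv_le_comm₀ (by positivity) (by norm_num)]
        rw [le_div_iff₀ (by norm_num)]
        linarith
      have : X ≤ Real.exp (c*p) * 4 := by
        have := mul_le_mul_of_nonneg_left hinv (le_of_lt (Real.exp_pos (c*p)))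
        linarith
      calc X ≤ Real.exp (c*p) * 4 := this
        _ ≤ Real.exp (c*p) * (4:ℝ)^p := by
            exact mul_le_mul_of_nonneg_left h4p (le_of_lt (Real.exp_pos _))
        _ = (4 * Real.exp c) ^ p := by
            rw [Real.mul_rpow (by norm_num) (le_of_lt (Real.exp_pos _)), ← Real.exp_mul]
            ring
    calc X ^ (1/p) ≤ ((4 * Real.exp c) ^ p) ^ (1/p) :=
          Real.rpow_le_rpow hX0 hXle2 (by positivity)
      _ = 4 * Real.exp c := by
          rw [← Real.rpow_mul (by positivity), mul_one_div_cancel (ne_of_gt hp0),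
            Real.rpow_one]
      _ ≤ 4 * Real.exp (2/3*τ^3) * Real.exp (-2*τ*(1-K₁)*σ) := by nlinarith [hE]
  · -- the sup bound
    intro u hu
    have h1 := hnorm u hu
    have h2 : Real.exp (-(1/4) * u) ≤ 1 := by
      rw [Real.exp_le_one_iff]
      nlinarith
    have h3 : Real.exp c * Real.exp (-(1/4) * u) ≤ Real.exp c := by
      nlinarith [Real.exp_pos c]
    have h4 : Real.exp c ≤ 4 * Real.exp (2/3*τ^3) * Real.exp (-2*τ*(1-K₁)*σ) := by
      nlinarith [Real.exp_pos (2/3*τ^3), Real.exp_pos (-2*τ*(1-K₁)*σ)]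
    linarith
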